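/- Existence of a non-characteristic point with prescribed location (geometric lemma): Let T : ℝ → ℝ be 1-Lipschitz and suppose there exist T_* ∈ ℝ, x_* ∈ ℝ and δ_* ∈ (0,1) such that T(x) ≥ T_* − δ_* |x − x_*| for all x ∈ ℝ. Then for every x₁ ∈ ℝ and every δ₁ ∈ (δ_*, 1), there exists x₀ ∈ ℝ such that: (i) T(x₀) ≤ T(x₁) − δ₁ |x₀ − x₁|, and (ii) for all ξ ∈ ℝ, T(ξ) ≥ T(x₀) − δ₁ |ξ − x₀|. In particular, x₀ is a non-characteristic point of the graph of T (with slope parameter at most δ₁ < 1). -/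

import Mathlib

open Real MeasureTheory Set

noncomputable section

/-- κ₀ = (2(p+1)/(p−1)²)^{1/(p−1)} -/
def kappa0 (p : ℝ) : ℝ := (2 * (p + 1) / (p - 1) ^ 2) ^ (1 / (p - 1))

/-- κ(d,y) = κ₀ (1−d²)^{1/(p−1)} (1+dy)^{−2/(p−1)} -/
def kappaD (p d y : ℝ) : ℝ :=
  kappa0 p * (1 - d ^ 2) ^ (1 / (p - 1)) * (1 + d * y) ^ (-(2 / (p - 1)))

/-- ρ(y) = (1−y²)^{2/(p−1)} -/
def rho (p y : ℝ) : ℝ := (1 - y ^ 2) ^ (2 / (p - 1))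

/-- u is a C² solution of ∂²ₜu = ∂²ₓu + |u|^{p−1}u on D (first variable space, second time). -/
def IsWaveSolution (p : ℝ) (D : Set (ℝ × ℝ)) (u : ℝ → ℝ → ℂ) : Prop :=
  ContDiffOn ℝ 2 (fun q : ℝ × ℝ => u q.1 q.2) D ∧
  ∀ q ∈ D,
    deriv (deriv (fun t => u q.1 t)) q.2 =
      deriv (deriv (fun x => u x q.2)) q.1 +
        ((‖u q.1 q.2‖ ^ (p - 1) : ℝ) : ℂ) * u q.1 q.2

/-- w is a C² solution of the self-similar equation (★) on D (first variable y, second s). -/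
def IsStarSolution (p : ℝ) (D : Set (ℝ × ℝ)) (w : ℝ → ℝ → ℂ) : Prop :=
  ContDiffOn ℝ 2 (fun q : ℝ × ℝ => w q.1 q.2) D ∧
  ∀ q ∈ D,
    deriv (deriv (fun s => w q.1 s)) q.2 =
      (((rho p q.1)⁻¹ : ℝ) : ℂ) *
          deriv (fun y => ((rho p y * (1 - y ^ 2) : ℝ) : ℂ) * deriv (fun z => w z q.2) y) q.1
        - ((2 * (p + 1) / (p - 1) ^ 2 : ℝ) : ℂ) * w q.1 q.2
        + ((‖w q.1 q.2‖ ^ (p - 1) : ℝ) : ℂ) * w q.1 q.2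
        - (((p + 3) / (p - 1) : ℝ) : ℂ) * deriv (fun s => w q.1 s) q.2
        - 2 * (q.1 : ℂ) * deriv (fun y => deriv (fun s => w y s) q.2) q.1

/-- L² norm on the interval (a,b). -/
def L2norm (a b : ℝ) (f : ℝ → ℂ) : ℝ :=
  Real.sqrt (∫ x in Ioo a b, ‖f x‖ ^ 2)

/-- H¹ norm on the interval (a,b). -/
def H1norm (a b : ℝ) (f : ℝ → ℂ) : ℝ :=
  Real.sqrt (∫ x in Ioo a b, (‖f x‖ ^ 2 + ‖deriv f x‖ ^ 2))

/-- The weighted norm of the energy space H. -/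
def Hnorm (p : ℝ) (q1 q2 : ℝ → ℂ) : ℝ :=
  Real.sqrt (∫ y in Ioo (-1 : ℝ) 1,
    (‖q1 y‖ ^ 2 + ‖deriv q1 y‖ ^ 2 * (1 - y ^ 2) +
      ‖q2 y‖ ^ 2) * rho p y)

/-- The Lyapunov functional E. -/
def energy (p : ℝ) (w v : ℝ → ℂ) : ℝ :=
  ∫ y in Ioo (-1 : ℝ) 1,
    ((1 / 2) * ‖v y‖ ^ 2 + (1 / 2) * ‖deriv w y‖ ^ 2 * (1 - y ^ 2) +
      ((p + 1) / (p - 1) ^ 2) * ‖w y‖ ^ 2 -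
      (1 / (p + 1)) * ‖w y‖ ^ (p + 1)) * rho p y

/-- Self-similar variables around (x, T x). -/
def wSelf (p : ℝ) (u : ℝ → ℝ → ℂ) (T : ℝ → ℝ) (x y s : ℝ) : ℂ :=
  ((Real.exp (-s)) ^ (2 / (p - 1)) : ℝ) * u (x + y * Real.exp (-s)) (T x - Real.exp (-s))

/-- x₀ is a non-characteristic point for the blow-up curve T. -/
def NonChar (T : ℝ → ℝ) (x0 : ℝ) : Prop :=
  ∃ δ0 ∈ Ioo (0 : ℝ) 1, ∃ t0 < T x0, ∀ ξ τ : ℝ,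
    (ξ, τ) ≠ (x0, T x0) → t0 ≤ τ → τ ≤ T x0 - δ0 * |ξ - x0| → τ < T ξ

/-- Blow-up setup: u solves the wave equation on D_u = {t < T x} and admits no extension. -/
def BlowupSetup (p : ℝ) (T : ℝ → ℝ) (u : ℝ → ℝ → ℂ) : Prop :=
  LipschitzWith 1 T ∧
  IsWaveSolution p {q : ℝ × ℝ | q.2 < T q.1} u ∧
  ¬ ∃ (T' : ℝ → ℝ) (u' : ℝ → ℝ → ℂ),
      (∀ x, T x ≤ T' x) ∧ T' ≠ T ∧
      IsWaveSolution p {q : ℝ × ℝ | q.2 < T' q.1} u' ∧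
      ∀ q : ℝ × ℝ, q.2 < T q.1 → u' q.1 q.2 = u q.1 q.2

/-- Hypothesis (P): exponential convergence to the profile at every non-characteristic point. -/
def HypP (p : ℝ) (T : ℝ → ℝ) (u : ℝ → ℝ → ℂ) (C0 μ0 : ℝ) (d θ sf : ℝ → ℝ) : Prop :=
  0 < C0 ∧ 0 < μ0 ∧
  ∀ x, NonChar T x →
    d x ∈ Ioo (-1 : ℝ) 1 ∧
    ∀ s ≥ sf x,
      Hnorm p
        (fun y => wSelf p u T x y s -
          Complex.exp (Complex.I * (θ x : ℂ)) * ((kappaD p (d x) y : ℝ) : ℂ))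
        (fun y => deriv (fun z => wSelf p u T x y z) s)
      ≤ C0 * Real.exp (-μ0 * (s - sf x))

/-- Existence of a non-characteristic point with prescribed location. -/
theorem exists_nonchar_point_with_location (T : ℝ → ℝ) (hT : LipschitzWith 1 T)
    (Tstar xstar δstar : ℝ) (hδ : δstar ∈ Ioo (0 : ℝ) 1)
    (hlow : ∀ x : ℝ, Tstar - δstar * |x - xstar| ≤ T x) :
    ∀ x1 δ1 : ℝ, δstar < δ1 → δ1 < 1 →
      ∃ x0 : ℝ, T x0 ≤ T x1 - δ1 * |x0 - x1| ∧ ∀ ξ : ℝ, T x0 - δ1 * |ξ - x0| ≤ T ξ := by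
  intro x1 δ1 hδ1 hδ1'
  set f : ℝ → ℝ := fun x => T x + δ1 * |x - x1| with hf
  have hcont : Continuous f :=
    hT.continuous.add ((continuous_const.mul ((continuous_id.sub continuous_const).abs)))
  have hδpos : (0 : ℝ) < δstar := hδ.1
  have hδ1pos : (0 : ℝ) < δ1 := lt_trans hδpos hδ1
  have hpos : (0 : ℝ) < δ1 - δstar := by linarith
  -- lower bound: f x ≥ Tstar - δstar*|x1 - xstar| + (δ1 - δstar)*|x - x1|
  have hlb : ∀ x, Tstar - δstar * |x1 - xstar| + (δ1 - δstar) * |x - x1| ≤ f x := by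
    intro x
    have h1 := hlow x
    have h2 : |x - xstar| ≤ |x - x1| + |x1 - xstar| := abs_sub_le x x1 xstar
    have h3 : δstar * |x - xstar| ≤ δstar * (|x - x1| + |x1 - xstar|) :=
      mul_le_mul_of_nonneg_left h2 (le_of_lt hδ.1)
    simp only [hf]; nlinarith
  set M : ℝ := T x1 - (Tstar - δstar * |x1 - xstar|) with hM
  have hM0 : 0 ≤ M := by
    have := hlow x1; simp only [hM]; linarith
  set R : ℝ := M / (δ1 - δstar) + 1 with hR
  have hR0 : 0 < R := by positivity
  have hKne : (Icc (x1 - R) (x1 + R)).Nonempty := ⟨x1, by constructor <;> linarith⟩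
  obtain ⟨x0, hx0mem, hx0min⟩ :=
    (isCompact_Icc).exists_isMinOn hKne hcont.continuousOn
  have hx1mem : x1 ∈ Icc (x1 - R) (x1 + R) := ⟨by linarith, by linarith⟩
  have hfx1 : f x1 = T x1 := by simp [hf]
  have hle1 : f x0 ≤ T x1 := by
    have h := hx0min hx1mem
    simp only [mem_setOf_eq] at h
    rwa [hfx1] at h
  -- global minimality
  have hglob : ∀ x, f x0 ≤ f x := by
    intro x
    by_cases hx : x ∈ Icc (x1 - R) (x1 + R)
    · exact hx0min hx
    · have habs : R < |x - x1| := by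
        simp only [mem_Icc, not_and_or, not_le] at hx
        rcases abs_cases (x - x1) with ⟨h', _⟩ | ⟨h', _⟩ <;> rcases hx with h | h <;> linarith
      have h1 := hlb x
      have h2 : (δ1 - δstar) * R ≤ (δ1 - δstar) * |x - x1| :=
        mul_le_mul_of_nonneg_left habs.le hpos.le
      have h3 : (δ1 - δstar) * R = M + (δ1 - δstar) := by
        rw [hR, mul_add, mul_one, mul_comm, div_mul_cancel₀ M hpos.ne']
      have : T x1 ≤ f x := by
        have hMexp : Tstar - δstar * |x1 - xstar| + M = T x1 := by simp [hM]
        nlinarith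
      linarith
  refine ⟨x0, ?_, ?_⟩
  · -- T x0 ≤ T x1 - δ1 * |x0 - x1|
    have : T x0 + δ1 * |x0 - x1| ≤ T x1 := hle1
    linarith
  · intro ξ
    have h1 : f x0 ≤ f ξ := hglob ξ
    have htri : |ξ - x1| ≤ |ξ - x0| + |x0 - x1| := abs_sub_le ξ x0 x1
    have h2 : δ1 * |ξ - x1| ≤ δ1 * (|ξ - x0| + |x0 - x1|) :=
      mul_le_mul_of_nonneg_left htri (by linarith)
    simp only [hf] at h1
    nlinarith
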